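/- Let A : ℝ^{n×m} → ℝ^{n×m} be defined by A(ξ) = (g(|ξ|)/|ξ|)·ξ for ξ ≠ 0 and A(0)=0, where g is C¹ on (0,∞), increasing, g(0⁺)=0, and satisfies (p−1)g(t) ≤ t g'(t) ≤ (q−1)g(t) with 1 < p ≤ q. Then A is strictly monotone: ⟨A(ξ) − A(η), ξ − η⟩_F > 0 for all ξ ≠ η in ℝ^{n×m}. -/

import Mathlib

open scoped RealInnerProductSpace

/-- Strict monotonicity of the vector field `A(ξ) = (g(|ξ|)/|ξ|) ξ`:
`⟨A(ξ) - A(η), ξ - η⟩ > 0` for `ξ ≠ η`. -/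
theorem stmt_18 {n m : ℕ} (g g' : ℝ → ℝ) (p q : ℝ) (hp : 1 < p) (hpq : p ≤ q)
    (hg0 : g 0 = 0) (hg_mono : StrictMonoOn g (Set.Ici 0))
    (hg_pos : ∀ t > 0, 0 < g t)
    (hderiv : ∀ t > 0, HasDerivAt g (g' t) t)
    (hlow : ∀ t > 0, (p - 1) * g t ≤ t * g' t)
    (hup : ∀ t > 0, t * g' t ≤ (q - 1) * g t)
    (A : EuclideanSpace ℝ (Fin n × Fin m) → EuclideanSpace ℝ (Fin n × Fin m))
    (hA0 : A 0 = 0)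
    (hA : ∀ ξ, ξ ≠ 0 → A ξ = (g ‖ξ‖ / ‖ξ‖) • ξ) :
    ∀ ξ η : EuclideanSpace ℝ (Fin n × Fin m), ξ ≠ η →
      0 < ⟪A ξ - A η, ξ - η⟫ := by
  intro ξ η hne
  by_cases hξ : ξ = 0
  · subst hξ
    have hη : η ≠ 0 := fun h => hne h.symm
    have hb : 0 < ‖η‖ := norm_pos_iff.mpr hη
    rw [hA0, hA η hη, zero_sub, zero_sub, inner_neg_neg, real_inner_smul_left,
      real_inner_self_eq_norm_sq]
    have h1 : g ‖η‖ / ‖η‖ * ‖η‖ ^ 2 = g ‖η‖ * ‖η‖ := by field_simp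
    rw [h1]
    exact mul_pos (hg_pos _ hb) hb
  · by_cases hη : η = 0
    · subst hη
      have ha : 0 < ‖ξ‖ := norm_pos_iff.mpr hξ
      rw [hA0, hA ξ hξ, sub_zero, sub_zero, real_inner_smul_left,
        real_inner_self_eq_norm_sq]
      have h1 : g ‖ξ‖ / ‖ξ‖ * ‖ξ‖ ^ 2 = g ‖ξ‖ * ‖ξ‖ := by field_simp
      rw [h1]
      exact mul_pos (hg_pos _ ha) ha
    · -- both nonzero
      have ha : 0 < ‖ξ‖ := norm_pos_iff.mpr hξ
      have hb : 0 < ‖η‖ := norm_pos_iff.mpr hη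
      set a := ‖ξ‖ with ha'
      set b := ‖η‖ with hb'
      by_cases hab : a = b
      · -- equal norms: A ξ - A η = (g a / a) • (ξ - η)
        have hdiff : A ξ - A η = (g a / a) • (ξ - η) := by
          rw [hA ξ hξ, hA η hη, ← ha', ← hb', ← hab, smul_sub]
        rw [hdiff, real_inner_smul_left, real_inner_self_eq_norm_sq]
        have hsub : (0:ℝ) < ‖ξ - η‖ := by
          rw [norm_pos_iff]; exact sub_ne_zero.mpr hne
        exact mul_pos (div_pos (hg_pos _ ha) ha) (by positivity)
      · rw [hA ξ hξ, hA η hη]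
        have hexp : ⟪(g a / a) • ξ - (g b / b) • η, ξ - η⟫ =
            g a / a * a ^ 2 + g b / b * b ^ 2 - (g a / a + g b / b) * ⟪ξ, η⟫ := by
          simp only [inner_sub_left, inner_sub_right, real_inner_smul_left,
            real_inner_self_eq_norm_sq, real_inner_comm η ξ]
          ring
        rw [hexp]
        have hcs : ⟪ξ, η⟫ ≤ a * b := real_inner_le_norm ξ η
        have hcoef : 0 ≤ g a / a + g b / b :=
          add_nonneg (le_of_lt (div_pos (hg_pos _ ha) ha))
            (le_of_lt (div_pos (hg_pos _ hb) hb))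
        have hmul : (g a / a + g b / b) * ⟪ξ, η⟫ ≤ (g a / a + g b / b) * (a * b) :=
          mul_le_mul_of_nonneg_left hcs hcoef
        have hkey : 0 < (g a - g b) * (a - b) := by
          rcases lt_or_gt_of_ne hab with h | h
          · have := hg_mono (le_of_lt ha) (le_of_lt hb) h
            nlinarith
          · have := hg_mono (le_of_lt hb) (le_of_lt ha) h
            nlinarith
        have hid : g a / a * a ^ 2 + g b / b * b ^ 2 - (g a / a + g b / b) * (a * b)
            = (g a - g b) * (a - b) := by field_simp; ring
        linarith [hmul, hid ▸ hkey]
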